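/- Let G be a graph with an edge uv, and let S(G,uv) be the graph obtained by subdividing the edge uv four times (replacing uv by a path u–w–x–y–z–v with four new vertices). Then S(G,uv) is a nut graph if and only if G is a nut graph. -/

import Mathlib

open Matrix

attribute [local instance] Classical.propDecidable

/-- A nut graph: a connected simple graph whose adjacency matrix has a
one-dimensional kernel spanned by a vector with all entries nonzero. -/
def IsNutGraph {V : Type*} [Fintype V] (G : SimpleGraph V) : Prop :=
  G.Connected ∧ ∃ x : V → ℝ,
    G.adjMatrix ℝ *ᵥ x = 0 ∧ (∀ v, x v ≠ 0) ∧
    ∀ y : V → ℝ, G.adjMatrix ℝ *ᵥ y = 0 → ∃ c : ℝ, y = c • x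

/-- The subdivision construction `S(G, uv)`: replace edge `uv` by a path
`u–w–x–y–z–v` through four new vertices `w = inr 0`, `x = inr 1`,
`y = inr 2`, `z = inr 3`. -/
def subdivExt {V : Type*} (G : SimpleGraph V) (u v : V) : SimpleGraph (V ⊕ Fin 4) where
  Adj a b := match a, b with
    | Sum.inl a, Sum.inl b => G.Adj a b ∧ ¬(a = u ∧ b = v) ∧ ¬(a = v ∧ b = u)
    | Sum.inl a, Sum.inr i => (a = u ∧ i = 0) ∨ (a = v ∧ i = 3)
    | Sum.inr i, Sum.inl a => (a = u ∧ i = 0) ∨ (a = v ∧ i = 3)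
    | Sum.inr i, Sum.inr j => i.val + 1 = j.val ∨ j.val + 1 = i.val
  symm := by
    constructor
    rintro (a | i) (b | j) h
    · exact ⟨h.1.symm, fun hc => h.2.2 ⟨hc.2, hc.1⟩, fun hc => h.2.1 ⟨hc.2, hc.1⟩⟩
    · exact h
    · exact h
    · exact h.symm
  loopless := by
    constructor
    rintro (a | i) h
    · exact G.irrefl h.1
    · omega

namespace NutAux

set_option linter.unusedSectionVars false
set_option linter.unusedVariables false

variable {V : Type*} [Fintype V] {G : SimpleGraph V} {u v : V}

lemma adj_inl_inl {a b : V} : (subdivExt G u v).Adj (Sum.inl a) (Sum.inl b) ↔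
    G.Adj a b ∧ ¬(a = u ∧ b = v) ∧ ¬(a = v ∧ b = u) := Iff.rfl

lemma adj_inl_inr {a : V} {i : Fin 4} : (subdivExt G u v).Adj (Sum.inl a) (Sum.inr i) ↔
    (a = u ∧ i = 0) ∨ (a = v ∧ i = 3) := Iff.rfl

lemma adj_inr_inl {a : V} {i : Fin 4} : (subdivExt G u v).Adj (Sum.inr i) (Sum.inl a) ↔
    (a = u ∧ i = 0) ∨ (a = v ∧ i = 3) := Iff.rfl

lemma adj_inr_inr {i j : Fin 4} : (subdivExt G u v).Adj (Sum.inr i) (Sum.inr j) ↔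
    i.val + 1 = j.val ∨ j.val + 1 = i.val := Iff.rfl

lemma mulVec_expand {W : Type*} [Fintype W] (H : SimpleGraph W) (y : W → ℝ) (a : W) :
    (H.adjMatrix ℝ *ᵥ y) a = ∑ b, if H.Adj a b then y b else 0 := by
  simp [Matrix.mulVec, dotProduct, SimpleGraph.adjMatrix_apply, ite_mul]

lemma sum_single (a : V) (f : V → ℝ) : ∑ b, (if b = a then f b else 0) = f a := by
  rw [Finset.sum_ite_eq' Finset.univ a f]; simp

lemma sum_drop (hadj : G.Adj u v) (f : V → ℝ) :
    ∑ b, (if G.Adj u b ∧ ¬ b = v then f b else 0) =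
      (∑ b, if G.Adj u b then f b else 0) - f v := by
  rw [eq_sub_iff_add_eq, ← sum_single v f, ← Finset.sum_add_distrib]
  refine Finset.sum_congr rfl fun b _ => ?_
  by_cases hb : b = v
  · subst hb; simp [hadj]
  · simp [hb]

lemma mulVec_inr (y : V ⊕ Fin 4 → ℝ) (i : Fin 4) :
    ((subdivExt G u v).adjMatrix ℝ *ᵥ y) (Sum.inr i) =
      (∑ b, if (b = u ∧ i = 0) ∨ (b = v ∧ i = 3) then y (Sum.inl b) else 0) +
      ∑ j, if (i.val + 1 = j.val ∨ j.val + 1 = i.val) then y (Sum.inr j) else 0 := by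
  rw [mulVec_expand, Fintype.sum_sum_type]
  congr 1
  · exact Finset.sum_congr rfl fun b _ => if_congr adj_inr_inl rfl rfl
  · exact Finset.sum_congr rfl fun j _ => if_congr adj_inr_inr rfl rfl

lemma val_simp : ((0:Fin 4).val = 0) ∧ ((1:Fin 4).val = 1) ∧ ((2:Fin 4).val = 2) ∧ ((3:Fin 4).val = 3) :=
  ⟨rfl, rfl, rfl, rfl⟩

lemma mulVec_inr0 (y : V ⊕ Fin 4 → ℝ) :
    ((subdivExt G u v).adjMatrix ℝ *ᵥ y) (Sum.inr 0) = y (Sum.inl u) + y (Sum.inr 1) := by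
  rw [mulVec_inr]
  congr 1
  · rw [← sum_single u (fun b => y (Sum.inl b))]
    refine Finset.sum_congr rfl fun b _ => if_congr ?_ rfl rfl
    constructor
    · rintro (⟨h,_⟩|⟨_,h⟩)
      · exact h
      · exact absurd h (by decide)
    · intro h; exact Or.inl ⟨h, rfl⟩
  · rw [Fin.sum_univ_four]
    norm_num [val_simp.1, val_simp.2.1, val_simp.2.2.1, val_simp.2.2.2]

lemma mulVec_inr1 (y : V ⊕ Fin 4 → ℝ) :
    ((subdivExt G u v).adjMatrix ℝ *ᵥ y) (Sum.inr 1) = y (Sum.inr 0) + y (Sum.inr 2) := by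
  rw [mulVec_inr]
  rw [show (∑ b, if (b = u ∧ (1:Fin 4) = 0) ∨ (b = v ∧ (1:Fin 4) = 3) then y (Sum.inl b) else 0) = 0 from
    Finset.sum_eq_zero fun b _ => by
      rw [if_neg]; rintro (⟨_,h⟩|⟨_,h⟩) <;> exact absurd h (by decide)]
  rw [Fin.sum_univ_four]
  norm_num [val_simp.1, val_simp.2.1, val_simp.2.2.1, val_simp.2.2.2]

lemma mulVec_inr2 (y : V ⊕ Fin 4 → ℝ) :
    ((subdivExt G u v).adjMatrix ℝ *ᵥ y) (Sum.inr 2) = y (Sum.inr 1) + y (Sum.inr 3) := by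
  rw [mulVec_inr]
  rw [show (∑ b, if (b = u ∧ (2:Fin 4) = 0) ∨ (b = v ∧ (2:Fin 4) = 3) then y (Sum.inl b) else 0) = 0 from
    Finset.sum_eq_zero fun b _ => by
      rw [if_neg]; rintro (⟨_,h⟩|⟨_,h⟩) <;> exact absurd h (by decide)]
  rw [Fin.sum_univ_four]
  norm_num [val_simp.1, val_simp.2.1, val_simp.2.2.1, val_simp.2.2.2]

lemma mulVec_inr3 (y : V ⊕ Fin 4 → ℝ) :
    ((subdivExt G u v).adjMatrix ℝ *ᵥ y) (Sum.inr 3) = y (Sum.inl v) + y (Sum.inr 2) := by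
  rw [mulVec_inr]
  congr 1
  · rw [← sum_single v (fun b => y (Sum.inl b))]
    refine Finset.sum_congr rfl fun b _ => if_congr ?_ rfl rfl
    constructor
    · rintro (⟨_,h⟩|⟨h,_⟩)
      · exact absurd h (by decide)
      · exact h
    · intro h; exact Or.inr ⟨h, rfl⟩
  · rw [Fin.sum_univ_four]
    norm_num [val_simp.1, val_simp.2.1, val_simp.2.2.1, val_simp.2.2.2]

lemma mulVec_inl (y : V ⊕ Fin 4 → ℝ) (a : V) :
    ((subdivExt G u v).adjMatrix ℝ *ᵥ y) (Sum.inl a) =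
      (∑ b, if G.Adj a b ∧ ¬(a = u ∧ b = v) ∧ ¬(a = v ∧ b = u) then y (Sum.inl b) else 0) +
      ((if a = u then y (Sum.inr 0) else 0) + (if a = v then y (Sum.inr 3) else 0)) := by
  rw [mulVec_expand, Fintype.sum_sum_type]
  congr 1
  · exact Finset.sum_congr rfl fun b _ => if_congr adj_inl_inl rfl rfl
  · rw [show (∑ j, if (subdivExt G u v).Adj (Sum.inl a) (Sum.inr j) then y (Sum.inr j) else 0) =
        ∑ j : Fin 4, if (a = u ∧ j = 0) ∨ (a = v ∧ j = 3) then y (Sum.inr j) else 0 from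
      Finset.sum_congr rfl fun j _ => if_congr adj_inl_inr rfl rfl]
    rw [Fin.sum_univ_four]
    have h0 : ((a = u ∧ (0:Fin 4) = 0) ∨ (a = v ∧ (0:Fin 4) = 3)) ↔ a = u := by
      constructor
      · rintro (⟨h,_⟩|⟨_,h⟩); exact h; exact absurd h (by decide)
      · intro h; exact Or.inl ⟨h, rfl⟩
    have h3 : ((a = u ∧ (3:Fin 4) = 0) ∨ (a = v ∧ (3:Fin 4) = 3)) ↔ a = v := by
      constructor
      · rintro (⟨_,h⟩|⟨h,_⟩); exact absurd h (by decide); exact h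
      · intro h; exact Or.inr ⟨h, rfl⟩
    have h1 : ¬((a = u ∧ (1:Fin 4) = 0) ∨ (a = v ∧ (1:Fin 4) = 3)) := by
      rintro (⟨_,h⟩|⟨_,h⟩) <;> exact absurd h (by decide)
    have h2 : ¬((a = u ∧ (2:Fin 4) = 0) ∨ (a = v ∧ (2:Fin 4) = 3)) := by
      rintro (⟨_,h⟩|⟨_,h⟩) <;> exact absurd h (by decide)
    rw [if_congr h0 rfl rfl, if_congr h3 rfl rfl, if_neg h1, if_neg h2]
    ring

lemma mulVec_inl_ne (y : V ⊕ Fin 4 → ℝ) {a : V} (hu : a ≠ u) (hv : a ≠ v) :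
    ((subdivExt G u v).adjMatrix ℝ *ᵥ y) (Sum.inl a) =
      ∑ b, if G.Adj a b then y (Sum.inl b) else 0 := by
  rw [mulVec_inl, if_neg hu, if_neg hv]
  rw [add_zero, add_zero]
  refine Finset.sum_congr rfl fun b _ => if_congr ?_ rfl rfl
  constructor
  · exact fun h => h.1
  · intro h; exact ⟨h, fun hc => hu hc.1, fun hc => hv hc.1⟩

lemma mulVec_inl_u (hne : u ≠ v) (hadj : G.Adj u v) (y : V ⊕ Fin 4 → ℝ) :
    ((subdivExt G u v).adjMatrix ℝ *ᵥ y) (Sum.inl u) =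
      (∑ b, if G.Adj u b then y (Sum.inl b) else 0) - y (Sum.inl v) + y (Sum.inr 0) := by
  rw [mulVec_inl, if_pos rfl, if_neg hne]
  rw [show (∑ b, if G.Adj u b ∧ ¬(u = u ∧ b = v) ∧ ¬(u = v ∧ b = u) then y (Sum.inl b) else 0)
      = ∑ b, if G.Adj u b ∧ ¬ b = v then y (Sum.inl b) else 0 from
    Finset.sum_congr rfl fun b _ => if_congr (by tauto) rfl rfl]
  rw [sum_drop hadj]
  ring

lemma mulVec_inl_v (hne : u ≠ v) (hadj : G.Adj u v) (y : V ⊕ Fin 4 → ℝ) :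
    ((subdivExt G u v).adjMatrix ℝ *ᵥ y) (Sum.inl v) =
      (∑ b, if G.Adj v b then y (Sum.inl b) else 0) - y (Sum.inl u) + y (Sum.inr 3) := by
  rw [mulVec_inl, if_pos rfl, if_neg hne.symm]
  rw [show (∑ b, if G.Adj v b ∧ ¬(v = u ∧ b = v) ∧ ¬(v = v ∧ b = u) then y (Sum.inl b) else 0)
      = ∑ b, if G.Adj v b ∧ ¬ b = u then y (Sum.inl b) else 0 from
    Finset.sum_congr rfl fun b _ => if_congr (by tauto) rfl rfl]
  rw [sum_drop hadj.symm]
  ring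

/-- The extended kernel vector. -/
def extVec (u v : V) (x : V → ℝ) : V ⊕ Fin 4 → ℝ
  | Sum.inl a => x a
  | Sum.inr i => ![x v, -x u, -x v, x u] i

@[simp] lemma extVec_inl (x : V → ℝ) (a : V) : extVec u v x (Sum.inl a) = x a := rfl
@[simp] lemma extVec_inr0 (x : V → ℝ) : extVec u v x (Sum.inr 0) = x v := rfl
@[simp] lemma extVec_inr1 (x : V → ℝ) : extVec u v x (Sum.inr 1) = -x u := rfl
@[simp] lemma extVec_inr2 (x : V → ℝ) : extVec u v x (Sum.inr 2) = -x v := rfl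
@[simp] lemma extVec_inr3 (x : V → ℝ) : extVec u v x (Sum.inr 3) = x u := rfl

lemma extVec_smul (x : V → ℝ) (c : ℝ) : extVec u v (c • x) = c • extVec u v x := by
  funext p
  rcases p with a | i
  · rfl
  · fin_cases i <;> simp [extVec]

lemma ext_ker (hadj : G.Adj u v) {x : V → ℝ} (hx : G.adjMatrix ℝ *ᵥ x = 0) :
    (subdivExt G u v).adjMatrix ℝ *ᵥ extVec u v x = 0 := by
  have hne : u ≠ v := hadj.ne
  funext p
  rcases p with a | i
  · by_cases ha : a = u
    · subst ha
      rw [Pi.zero_apply, mulVec_inl_u hne hadj]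
      have : (∑ b, if G.Adj a b then extVec a v x (Sum.inl b) else 0) = 0 := by
        rw [show (∑ b, if G.Adj a b then extVec a v x (Sum.inl b) else 0)
            = (G.adjMatrix ℝ *ᵥ x) a from (mulVec_expand G x a).symm, hx]
        rfl
      rw [this]; simp
    · by_cases hb : a = v
      · subst hb
        rw [Pi.zero_apply, mulVec_inl_v hne hadj]
        have : (∑ b, if G.Adj a b then extVec u a x (Sum.inl b) else 0) = 0 := by
          rw [show (∑ b, if G.Adj a b then extVec u a x (Sum.inl b) else 0)
              = (G.adjMatrix ℝ *ᵥ x) a from (mulVec_expand G x a).symm, hx]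
          rfl
        rw [this]; simp
      · rw [Pi.zero_apply, mulVec_inl_ne _ ha hb]
        rw [show (∑ b, if G.Adj a b then extVec u v x (Sum.inl b) else 0)
            = (G.adjMatrix ℝ *ᵥ x) a from (mulVec_expand G x a).symm, hx]
        rfl
  · fin_cases i
    · show ((subdivExt G u v).adjMatrix ℝ *ᵥ extVec u v x) (Sum.inr 0) = 0
      rw [mulVec_inr0]; simp
    · show ((subdivExt G u v).adjMatrix ℝ *ᵥ extVec u v x) (Sum.inr 1) = 0
      rw [mulVec_inr1]; simp
    · show ((subdivExt G u v).adjMatrix ℝ *ᵥ extVec u v x) (Sum.inr 2) = 0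
      rw [mulVec_inr2]; simp
    · show ((subdivExt G u v).adjMatrix ℝ *ᵥ extVec u v x) (Sum.inr 3) = 0
      rw [mulVec_inr3]; simp

lemma ker_determined {y : V ⊕ Fin 4 → ℝ}
    (hy : (subdivExt G u v).adjMatrix ℝ *ᵥ y = 0) :
    y = extVec u v (fun a => y (Sum.inl a)) := by
  have e0 := congrFun hy (Sum.inr 0); rw [mulVec_inr0, Pi.zero_apply] at e0
  have e1 := congrFun hy (Sum.inr 1); rw [mulVec_inr1, Pi.zero_apply] at e1
  have e2 := congrFun hy (Sum.inr 2); rw [mulVec_inr2, Pi.zero_apply] at e2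
  have e3 := congrFun hy (Sum.inr 3); rw [mulVec_inr3, Pi.zero_apply] at e3
  funext p
  rcases p with a | i
  · rfl
  · fin_cases i
    · show y (Sum.inr 0) = extVec u v (fun a => y (Sum.inl a)) (Sum.inr 0)
      rw [extVec_inr0]; linarith
    · show y (Sum.inr 1) = extVec u v (fun a => y (Sum.inl a)) (Sum.inr 1)
      rw [extVec_inr1]; linarith
    · show y (Sum.inr 2) = extVec u v (fun a => y (Sum.inl a)) (Sum.inr 2)
      rw [extVec_inr2]; linarith
    · show y (Sum.inr 3) = extVec u v (fun a => y (Sum.inl a)) (Sum.inr 3)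
      rw [extVec_inr3]; linarith

lemma restrict_ker (hadj : G.Adj u v) {y : V ⊕ Fin 4 → ℝ}
    (hy : (subdivExt G u v).adjMatrix ℝ *ᵥ y = 0) :
    G.adjMatrix ℝ *ᵥ (fun a => y (Sum.inl a)) = 0 := by
  have hne : u ≠ v := hadj.ne
  have e0 := congrFun hy (Sum.inr 0); rw [mulVec_inr0, Pi.zero_apply] at e0
  have e1 := congrFun hy (Sum.inr 1); rw [mulVec_inr1, Pi.zero_apply] at e1
  have e2 := congrFun hy (Sum.inr 2); rw [mulVec_inr2, Pi.zero_apply] at e2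
  have e3 := congrFun hy (Sum.inr 3); rw [mulVec_inr3, Pi.zero_apply] at e3
  funext a
  rw [Pi.zero_apply, mulVec_expand]
  by_cases ha : a = u
  · subst ha
    have h := congrFun hy (Sum.inl a); rw [mulVec_inl_u hne hadj, Pi.zero_apply] at h
    linarith
  · by_cases hb : a = v
    · subst hb
      have h := congrFun hy (Sum.inl a); rw [mulVec_inl_v hne hadj, Pi.zero_apply] at h
      linarith
    · have h := congrFun hy (Sum.inl a); rw [mulVec_inl_ne _ ha hb, Pi.zero_apply] at h
      exact h

/- Connectivity -/

lemma adj_step (hadj : G.Adj u v) {a b : V} (h : G.Adj a b) :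
    (subdivExt G u v).Reachable (Sum.inl a) (Sum.inl b) := by
  by_cases h1 : a = u ∧ b = v
  · obtain ⟨rfl, rfl⟩ := h1
    have s1 : (subdivExt G a b).Adj (Sum.inl a) (Sum.inr 0) := Or.inl ⟨rfl, rfl⟩
    have s2 : (subdivExt G a b).Adj (Sum.inr 0) (Sum.inr 1) := Or.inl rfl
    have s3 : (subdivExt G a b).Adj (Sum.inr 1) (Sum.inr 2) := Or.inl rfl
    have s4 : (subdivExt G a b).Adj (Sum.inr 2) (Sum.inr 3) := Or.inl rfl
    have s5 : (subdivExt G a b).Adj (Sum.inr 3) (Sum.inl b) := Or.inr ⟨rfl, rfl⟩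
    exact s1.reachable.trans (s2.reachable.trans (s3.reachable.trans
      (s4.reachable.trans s5.reachable)))
  · by_cases h2 : a = v ∧ b = u
    · obtain ⟨rfl, rfl⟩ := h2
      have s1 : (subdivExt G b a).Adj (Sum.inl b) (Sum.inr 0) := Or.inl ⟨rfl, rfl⟩
      have s2 : (subdivExt G b a).Adj (Sum.inr 0) (Sum.inr 1) := Or.inl rfl
      have s3 : (subdivExt G b a).Adj (Sum.inr 1) (Sum.inr 2) := Or.inl rfl
      have s4 : (subdivExt G b a).Adj (Sum.inr 2) (Sum.inr 3) := Or.inl rfl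
      have s5 : (subdivExt G b a).Adj (Sum.inr 3) (Sum.inl a) := Or.inr ⟨rfl, rfl⟩
      exact (s1.reachable.trans (s2.reachable.trans (s3.reachable.trans
        (s4.reachable.trans s5.reachable)))).symm
    · exact (adj_inl_inl.mpr ⟨h, h1, h2⟩).reachable

lemma reach_S_of_G (hadj : G.Adj u v) {a b : V} (h : G.Reachable a b) :
    (subdivExt G u v).Reachable (Sum.inl a) (Sum.inl b) := by
  obtain ⟨w⟩ := h
  induction w with
  | nil => exact SimpleGraph.Reachable.refl _
  | cons h p ih => exact (adj_step hadj h).trans ih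

lemma inr_reach (i : Fin 4) :
    (subdivExt G u v).Reachable (Sum.inr i) (Sum.inl u) := by
  have s1 : (subdivExt G u v).Adj (Sum.inr 0) (Sum.inl u) := Or.inl ⟨rfl, rfl⟩
  have s2 : (subdivExt G u v).Adj (Sum.inr 1) (Sum.inr 0) := Or.inr rfl
  have s3 : (subdivExt G u v).Adj (Sum.inr 2) (Sum.inr 1) := Or.inr rfl
  have s4 : (subdivExt G u v).Adj (Sum.inr 3) (Sum.inr 2) := Or.inr rfl
  fin_cases i
  · exact s1.reachable
  · exact s2.reachable.trans s1.reachable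
  · exact s3.reachable.trans (s2.reachable.trans s1.reachable)
  · exact s4.reachable.trans (s3.reachable.trans (s2.reachable.trans s1.reachable))

lemma reach_G_of_S (hadj : G.Adj u v) {p q : V ⊕ Fin 4}
    (h : (subdivExt G u v).Reachable p q) :
    G.Reachable (Sum.elim id (fun _ => u) p) (Sum.elim id (fun _ => u) q) := by
  obtain ⟨w⟩ := h
  induction w with
  | nil => exact SimpleGraph.Reachable.refl _
  | @cons p q r h w ih =>
    refine SimpleGraph.Reachable.trans ?_ ih
    rcases p with a | i <;> rcases q with b | j
    · exact h.1.reachable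
    · rcases h with ⟨rfl, _⟩ | ⟨rfl, _⟩
      · exact SimpleGraph.Reachable.refl _
      · exact hadj.symm.reachable
    · rcases h with ⟨rfl, _⟩ | ⟨rfl, _⟩
      · exact SimpleGraph.Reachable.refl _
      · exact hadj.reachable
    · exact SimpleGraph.Reachable.refl _

lemma connected_S (hadj : G.Adj u v) (hG : G.Connected) :
    (subdivExt G u v).Connected := by
  rw [SimpleGraph.connected_iff]
  refine ⟨?_, ⟨Sum.inl u⟩⟩
  rintro (a | i) (b | j)
  · exact reach_S_of_G hadj (hG.preconnected a b)
  · exact (reach_S_of_G hadj (hG.preconnected a u)).trans (inr_reach j).symm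
  · exact (inr_reach i).trans (reach_S_of_G hadj (hG.preconnected u b))
  · exact (inr_reach i).trans (inr_reach j).symm

lemma connected_G (hadj : G.Adj u v) (hS : (subdivExt G u v).Connected) :
    G.Connected := by
  rw [SimpleGraph.connected_iff]
  refine ⟨fun a b => ?_, ⟨u⟩⟩
  exact reach_G_of_S hadj (hS.preconnected (Sum.inl a) (Sum.inl b))

end NutAux

/-- Inserting four vertices on an edge `uv` of `G` yields a nut graph
if and only if `G` is a nut graph. -/
theorem subdivExt_nut_iff {V : Type*} [Fintype V] (G : SimpleGraph V) (u v : V)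
    (huv : G.Adj u v) :
    IsNutGraph (subdivExt G u v) ↔ IsNutGraph G := by
  constructor
  · rintro ⟨hconn, x', hker, hnz, hspan⟩
    refine ⟨NutAux.connected_G huv hconn, fun a => x' (Sum.inl a),
      NutAux.restrict_ker huv hker, fun a => hnz (Sum.inl a), ?_⟩
    intro y hy
    obtain ⟨c, hc⟩ := hspan (NutAux.extVec u v y) (NutAux.ext_ker huv hy)
    refine ⟨c, funext fun a => ?_⟩
    have := congrFun hc (Sum.inl a)
    simpa using this
  · rintro ⟨hconn, x, hker, hnz, hspan⟩
    refine ⟨NutAux.connected_S huv hconn, NutAux.extVec u v x,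
      NutAux.ext_ker huv hker, ?_, ?_⟩
    · rintro (a | i)
      · exact hnz a
      · fin_cases i
        · exact hnz v
        · simpa using hnz u
        · simpa using hnz v
        · exact hnz u
    · intro y hy
      obtain ⟨c, hc⟩ := hspan (fun a => y (Sum.inl a)) (NutAux.restrict_ker huv hy)
      refine ⟨c, ?_⟩
      rw [NutAux.ker_determined hy, hc, NutAux.extVec_smul]
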